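/- For every natural number n ≥ 0, 3·2^{n+3} divides the sum of the first 3·2^{n+3} Fibonacci numbers, i.e., 3·2^{n+3} ∣ ∑_{i=1}^{3·2^{n+3}} F_i. -/

import Mathlib

lemma aux_fib_pow2 (k : ℕ) :
    (2 * (3 * 2 ^ (k + 3)) : ℤ) ∣ (Nat.fib (3 * 2 ^ (k + 3)) : ℤ) ∧
    (2 * (3 * 2 ^ (k + 3)) : ℤ) ∣ (Nat.fib (3 * 2 ^ (k + 3) + 1) : ℤ) - 1 := by
  induction k with
  | zero =>
      have h24 : Nat.fib 24 = 46368 := by decide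
      have h25 : Nat.fib 25 = 75025 := by decide
      norm_num [h24, h25]
  | succ k ih =>
      obtain ⟨⟨a, ha⟩, ⟨b, hb⟩⟩ := ih
      have hb' : (Nat.fib (3 * 2 ^ (k + 3) + 1) : ℤ) = 2 * (3 * 2 ^ (k + 3)) * b + 1 := by
        linarith
      have hidx : 3 * 2 ^ (k + 1 + 3) = 2 * (3 * 2 ^ (k + 3)) := by ring
      have hle : Nat.fib (3 * 2 ^ (k + 3)) ≤ 2 * Nat.fib (3 * 2 ^ (k + 3) + 1) :=
        le_trans (Nat.fib_le_fib_succ) (by omega)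
      have hA2 : (Nat.fib (2 * (3 * 2 ^ (k + 3))) : ℤ) =
          (Nat.fib (3 * 2 ^ (k + 3)) : ℤ) *
            (2 * (Nat.fib (3 * 2 ^ (k + 3) + 1) : ℤ) - Nat.fib (3 * 2 ^ (k + 3))) := by
        rw [Nat.fib_two_mul]
        push_cast [hle]
        ring
      have hB2 : (Nat.fib (2 * (3 * 2 ^ (k + 3)) + 1) : ℤ) =
          (Nat.fib (3 * 2 ^ (k + 3) + 1) : ℤ) ^ 2 + (Nat.fib (3 * 2 ^ (k + 3)) : ℤ) ^ 2 := by
        rw [Nat.fib_two_mul_add_one]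
        push_cast
        ring
      rw [hidx]
      constructor
      · refine ⟨a * (2 * (3 * 2 ^ (k + 3) : ℤ)) * b + a - (3 * 2 ^ (k + 3) : ℤ) * a ^ 2, ?_⟩
        rw [hA2, ha, hb']
        ring
      · refine ⟨(3 * 2 ^ (k + 3) : ℤ) * b ^ 2 + b + (3 * 2 ^ (k + 3) : ℤ) * a ^ 2, ?_⟩
        rw [hB2, ha, hb']
        ring

theorem stmt_18 (n : ℕ) :
    3 * 2 ^ (n + 3) ∣ ∑ i ∈ Finset.Icc 1 (3 * 2 ^ (n + 3)), Nat.fib i := by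
  obtain ⟨hA, hB⟩ := aux_fib_pow2 n
  have hsum : ∑ i ∈ Finset.Icc 1 (3 * 2 ^ (n + 3)), Nat.fib i
      = Nat.fib (3 * 2 ^ (n + 3) + 2) - 1 := by
    have h1 : ∑ i ∈ Finset.range (3 * 2 ^ (n + 3) + 1), Nat.fib i
        = ∑ i ∈ Finset.Icc 1 (3 * 2 ^ (n + 3)), Nat.fib i := by
      rw [Finset.range_eq_Ico,
        Finset.sum_eq_sum_Ico_succ_bot (by positivity) Nat.fib,
        Nat.fib_zero, zero_add, Finset.Ico_add_one_right_eq_Icc]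
    have h2 := Nat.fib_succ_eq_succ_sum (3 * 2 ^ (n + 3) + 1)
    rw [show 3 * 2 ^ (n + 3) + 1 + 1 = 3 * 2 ^ (n + 3) + 2 from rfl] at h2
    omega
  rw [hsum]
  have d1 : ((3 * 2 ^ (n + 3) : ℕ) : ℤ) ∣ (Nat.fib (3 * 2 ^ (n + 3)) : ℤ) := by
    refine dvd_trans ⟨2, ?_⟩ hA
    push_cast; ring
  have d2 : ((3 * 2 ^ (n + 3) : ℕ) : ℤ) ∣ (Nat.fib (3 * 2 ^ (n + 3) + 1) : ℤ) - 1 := by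
    refine dvd_trans ⟨2, ?_⟩ hB
    push_cast; ring
  have hdvd : ((3 * 2 ^ (n + 3) : ℕ) : ℤ) ∣ (Nat.fib (3 * 2 ^ (n + 3) + 2) : ℤ) - 1 := by
    have h2 : (Nat.fib (3 * 2 ^ (n + 3) + 2) : ℤ) - 1 =
        ((Nat.fib (3 * 2 ^ (n + 3) + 1) : ℤ) - 1) + (Nat.fib (3 * 2 ^ (n + 3)) : ℤ) := by
      rw [show 3 * 2 ^ (n + 3) + 2 = (3 * 2 ^ (n + 3)) + 2 from rfl, Nat.fib_add_two]
      push_cast; ring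
    rw [h2]
    exact dvd_add d2 d1
  have h1le : 1 ≤ Nat.fib (3 * 2 ^ (n + 3) + 2) := Nat.fib_pos.mpr (by positivity)
  rw [← Int.ofNat_dvd]
  push_cast [Nat.cast_sub h1le] at hdvd ⊢
  exact hdvd
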